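/- Let α > 0 and q_i ∈ (0,1). Then 1/ξ(q_i, 1-q_i) > (1 + α q_i²)/((1 + α q_i) q_i (1 - q_i)), where ξ(x,y) = (1/(2α))(1 + α(x+y) - sqrt((1+α(x+y))² - 4α(1+α)xy)). -/

import Mathlib

noncomputable def xiOpt (α x y : ℝ) : ℝ :=
  (1 / (2 * α)) * ((1 + α * (x + y)) -
    Real.sqrt ((1 + α * (x + y)) ^ 2 - 4 * α * (1 + α) * x * y))

theorem bethe_stationary_exceeds_boundary (α qi : ℝ) (hα : 0 < α)
    (hqi : qi ∈ Set.Ioo (0:ℝ) 1) :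
    1 / xiOpt α qi (1 - qi) >
      (1 + α * qi ^ 2) / ((1 + α * qi) * qi * (1 - qi)) := by
  obtain ⟨hq0, hq1⟩ := hqi
  have hq1' : 0 < 1 - qi := by linarith
  set q := qi
  set D : ℝ := (1 + α * (q + (1 - q))) ^ 2 - 4 * α * (1 + α) * q * (1 - q) with hD
  have hDval : D = (1 + α) ^ 2 - 4 * α * (1 + α) * q * (1 - q) := by
    rw [hD]; ring
  have hDpos : 0 < D := by
    rw [hDval]
    nlinarith [sq_nonneg (1 - 2*q), mul_pos hα (mul_pos hq0 hq1'),
      sq_nonneg (1 + α - 2 * α * q * (1 - q)), mul_pos hq0 hq1']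
  set S : ℝ := Real.sqrt D with hS
  have hSsq : S ^ 2 = D := Real.sq_sqrt hDpos.le
  have hSpos : 0 < S := Real.sqrt_pos.mpr hDpos
  have hSlt : S < 1 + α := by
    have h1 : D < (1 + α) ^ 2 := by
      rw [hDval]
      nlinarith [mul_pos hα (mul_pos hq0 hq1'), mul_pos (mul_pos hα hq0) hq1']
    have := Real.sqrt_lt_sqrt hDpos.le h1
    rwa [Real.sqrt_sq (by positivity)] at this
  have hxi : xiOpt α q (1 - q) = (1 + α - S) / (2 * α) := by
    unfold xiOpt
    rw [← hS]
    field_simp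
    ring
  have hxipos : 0 < xiOpt α q (1 - q) := by
    rw [hxi]
    apply div_pos (by linarith) (by linarith)
  have hden : 0 < (1 + α * q) * q * (1 - q) := by positivity
  have hnum : 0 < 1 + α * q ^ 2 := by positivity
  rw [gt_iff_lt, div_lt_div_iff₀ hden hxipos, hxi]
  have hre : (1 + α * q ^ 2) * ((1 + α - S) / (2 * α)) =
      ((1 + α * q ^ 2) * (1 + α - S)) / (2 * α) := by ring
  rw [hre, div_lt_iff₀ (by linarith : (0:ℝ) < 2 * α)]
  -- goal: (1 + α*q^2) * (1 + α - S) < (1+α*q)*q*(1-q) * 1 * (2*α)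
  have key : (1 + α * q ^ 2) * (1 + α) - 2 * α * (1 + α * q) * q * (1 - q)
      < (1 + α * q ^ 2) * S := by
    set L : ℝ := (1 + α * q ^ 2) * (1 + α) - 2 * α * (1 + α * q) * q * (1 - q) with hL
    rcases le_or_gt L 0 with h | h
    · exact lt_of_le_of_lt h (by positivity)
    · have hsq : L ^ 2 < ((1 + α * q ^ 2) * S) ^ 2 := by
        have : ((1 + α * q ^ 2) * S) ^ 2 = (1 + α * q ^ 2) ^ 2 * D := by
          rw [mul_pow, hSsq]
        rw [this, hDval, hL]
        nlinarith [mul_pos (mul_pos (mul_pos hα hα) hα) (mul_pos (mul_pos (mul_pos hq0 hq0) (mul_pos hq1' hq1')) (mul_pos hq1' hq1'))]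
      by_contra hc
      push_neg at hc
      have : ((1 + α * q ^ 2) * S) ^ 2 ≤ L ^ 2 := by
        apply pow_le_pow_left₀ (by positivity) hc
      linarith
  nlinarith [key]
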